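/- Let V : ℝ² → ℝ satisfy V(-x₁,x₂) = V(x₁,x₂) for all (x₁,x₂) ∈ ℝ², let ω ∈ ℝ, and let k = (k₁,k₂) ∈ ℝ² with k₁ ∈ {0, 1/2}. Let u : ℝ² → ℂ be twice continuously differentiable, not identically zero, with -Δu(x) + V(x)u(x) = ω u(x) for all x ∈ ℝ² and u(x + 2πm) = e^{2πi m·k} u(x) for all x ∈ ℝ² and m ∈ ℤ². Assume the eigenvalue ω has geometric multiplicity one in the sense that every twice continuously differentiable w : ℝ² → ℂ satisfying the same equation -Δw + Vw = ωw and the same quasiperiodicity condition equals c·u for some c ∈ ℂ. Then either u(-x₁,x₂) = u(x₁,x₂) for all (x₁,x₂) ∈ ℝ², or u(-x₁,x₂) = -u(x₁,x₂) for all (x₁,x₂) ∈ ℝ². -/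

import Mathlib

/-- The Laplacian of a (curried) function on `ℝ²`. -/
noncomputable def lap (u : ℝ → ℝ → ℂ) (x₁ x₂ : ℝ) : ℂ :=
  deriv (deriv (fun t => u t x₂)) x₁ + deriv (deriv (fun t => u x₁ t)) x₂

lemma lap_reflect (u : ℝ → ℝ → ℂ) (x₁ x₂ : ℝ) :
    lap (fun a b => u (-a) b) x₁ x₂ = lap u (-x₁) x₂ := by
  unfold lap
  congr 1
  · have h1 : deriv (fun t => u (-t) x₂) = fun t => -(deriv (fun s => u s x₂) (-t)) := by
      funext t
      exact deriv_comp_neg (fun s => u s x₂) t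
    rw [h1]
    have h2 : deriv (fun t => -(deriv (fun s => u s x₂) (-t))) x₁
        = -(deriv (fun t => deriv (fun s => u s x₂) (-t)) x₁) := deriv.neg
    rw [h2, deriv_comp_neg (deriv fun s => u s x₂) x₁, neg_neg]

theorem stmt16 (V : ℝ → ℝ → ℝ) (hV : ∀ x₁ x₂ : ℝ, V (-x₁) x₂ = V x₁ x₂)
    (ω k₁ k₂ : ℝ) (hk₁ : k₁ = 0 ∨ k₁ = 1 / 2) (u : ℝ → ℝ → ℂ)
    (hu : ContDiff ℝ 2 (fun p : ℝ × ℝ => u p.1 p.2))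
    (hne : ∃ x₁ x₂ : ℝ, u x₁ x₂ ≠ 0)
    (heq : ∀ x₁ x₂ : ℝ,
      -(lap u x₁ x₂) + (V x₁ x₂ : ℂ) * u x₁ x₂ = (ω : ℂ) * u x₁ x₂)
    (hqp : ∀ (x₁ x₂ : ℝ) (m₁ m₂ : ℤ),
      u (x₁ + 2 * Real.pi * m₁) (x₂ + 2 * Real.pi * m₂)
        = Complex.exp (2 * (Real.pi : ℂ) * Complex.I * ((m₁ : ℂ) * (k₁ : ℂ) + (m₂ : ℂ) * (k₂ : ℂ)))
            * u x₁ x₂)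
    (hsimple : ∀ w : ℝ → ℝ → ℂ,
      ContDiff ℝ 2 (fun p : ℝ × ℝ => w p.1 p.2) →
      (∀ x₁ x₂ : ℝ,
        -(lap w x₁ x₂) + (V x₁ x₂ : ℂ) * w x₁ x₂ = (ω : ℂ) * w x₁ x₂) →
      (∀ (x₁ x₂ : ℝ) (m₁ m₂ : ℤ),
        w (x₁ + 2 * Real.pi * m₁) (x₂ + 2 * Real.pi * m₂)
          = Complex.exp (2 * (Real.pi : ℂ) * Complex.I
              * ((m₁ : ℂ) * (k₁ : ℂ) + (m₂ : ℂ) * (k₂ : ℂ))) * w x₁ x₂) →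
      ∃ c : ℂ, ∀ x₁ x₂ : ℝ, w x₁ x₂ = c * u x₁ x₂) :
    (∀ x₁ x₂ : ℝ, u (-x₁) x₂ = u x₁ x₂) ∨ (∀ x₁ x₂ : ℝ, u (-x₁) x₂ = -u x₁ x₂) := by
  set w : ℝ → ℝ → ℂ := fun a b => u (-a) b with hw
  have hcd : ContDiff ℝ 2 (fun p : ℝ × ℝ => w p.1 p.2) := by
    have : ContDiff ℝ 2 (fun p : ℝ × ℝ => ((-p.1, p.2) : ℝ × ℝ)) :=
      ContDiff.prodMk (contDiff_fst.neg) contDiff_snd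
    exact hu.comp this
  have hweq : ∀ x₁ x₂ : ℝ,
      -(lap w x₁ x₂) + (V x₁ x₂ : ℂ) * w x₁ x₂ = (ω : ℂ) * w x₁ x₂ := by
    intro x₁ x₂
    have := heq (-x₁) x₂
    rw [hV] at this
    simpa [hw, lap_reflect u x₁ x₂] using this
  have hwqp : ∀ (x₁ x₂ : ℝ) (m₁ m₂ : ℤ),
      w (x₁ + 2 * Real.pi * m₁) (x₂ + 2 * Real.pi * m₂)
        = Complex.exp (2 * (Real.pi : ℂ) * Complex.I
            * ((m₁ : ℂ) * (k₁ : ℂ) + (m₂ : ℂ) * (k₂ : ℂ))) * w x₁ x₂ := by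
    intro x₁ x₂ m₁ m₂
    have harg : -(x₁ + 2 * Real.pi * m₁) = -x₁ + 2 * Real.pi * ((-m₁ : ℤ) : ℝ) := by
      push_cast; ring
    have h1 : w (x₁ + 2 * Real.pi * m₁) (x₂ + 2 * Real.pi * m₂)
        = Complex.exp (2 * (Real.pi : ℂ) * Complex.I
            * (((-m₁ : ℤ) : ℂ) * (k₁ : ℂ) + (m₂ : ℂ) * (k₂ : ℂ))) * w x₁ x₂ := by
      simp only [hw, harg]
      exact hqp (-x₁) x₂ (-m₁) m₂
    rw [h1]
    congr 1
    rcases hk₁ with h | h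
    · subst h; norm_num
    · subst h
      have : (2 : ℂ) * (Real.pi : ℂ) * Complex.I
            * (((-m₁ : ℤ) : ℂ) * ((1/2 : ℝ) : ℂ) + (m₂ : ℂ) * (k₂ : ℂ))
          = 2 * (Real.pi : ℂ) * Complex.I
            * ((m₁ : ℂ) * ((1/2 : ℝ) : ℂ) + (m₂ : ℂ) * (k₂ : ℂ))
            + ((-m₁ : ℤ) : ℂ) * (2 * (Real.pi : ℂ) * Complex.I) := by
        push_cast; ring
      rw [this, Complex.exp_add, Complex.exp_int_mul_two_pi_mul_I, mul_one]
  obtain ⟨c, hc⟩ := hsimple w hcd hweq hwqp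
  obtain ⟨a, b, hab⟩ := hne
  have hcc : c * c = 1 := by
    have e1 : u (-a) b = c * u a b := hc a b
    have e2 : u a b = c * u (-a) b := by
      have := hc (-a) b
      simpa [hw, neg_neg] using this
    have h1 : u a b = c * (c * u a b) := by
      calc u a b = c * u (-a) b := e2
        _ = c * (c * u a b) := by rw [e1]
    have hz : (c * c - 1) * u a b = 0 := by linear_combination -h1
    rcases mul_eq_zero.mp hz with h | h
    · exact sub_eq_zero.mp h
    · exact absurd h hab
  rcases mul_self_eq_one_iff.mp hcc with h | h
  · left; intro x₁ x₂; have := hc x₁ x₂; simp only [hw] at this; rw [this, h, one_mul]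
  · right; intro x₁ x₂; have := hc x₁ x₂; simp only [hw] at this; rw [this, h]; ring
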